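/- Let p be an odd prime with (2/p) = 1 (i.e., 2 is a quadratic residue mod p), and let q = p^n. Then the number of triples (a,b,c) in F_q^3 with c^3 - a*b*c^2 + (a^2+b^2-2)*c - a*b = 0 equals q^2 + 4q + 2. -/

import Mathlib

open Finset

section helpers

variable {F : Type} [Field F] [Fintype F] [DecidableEq F]

lemma card_ne_zero' : Fintype.card {x : F // x ≠ 0} = Fintype.card F - 1 := by
  have := Fintype.card_subtype_compl (fun x : F => x = 0)
  simpa [Fintype.card_subtype_eq] using this

lemma card_hyperbola {d : F} (hd : d ≠ 0) :
    Fintype.card {p : F × F // p.1 * p.2 = d} = Fintype.card F - 1 := by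
  rw [← card_ne_zero' (F := F)]
  apply Fintype.card_congr
  refine
    { toFun := fun v => ⟨v.1.1, fun h => hd (by rw [← v.2, h, zero_mul])⟩
      invFun := fun x => ⟨(x.1, x.1⁻¹ * d), by
        rw [← mul_assoc, mul_inv_cancel₀ x.2, one_mul]⟩
      left_inv := fun v => ?_
      right_inv := fun x => rfl }
  obtain ⟨⟨a, b⟩, hab⟩ := v
  have h1 : a ≠ 0 := fun h => hd (by rw [← hab, h, zero_mul])
  apply Subtype.ext
  show (a, a⁻¹ * d) = (a, b)
  rw [← hab, inv_mul_cancel_left₀ h1]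

lemma card_degenerate :
    Fintype.card {p : F × F // p.1 * p.2 = 0} = 2 * Fintype.card F - 1 := by
  have e1 : {p : F × F // p.1 * p.2 = 0} ≃ {p : F × F // p.1 = 0 ∨ (p.1 ≠ 0 ∧ p.2 = 0)} :=
    Equiv.subtypeEquivRight (fun p => by rw [mul_eq_zero]; tauto)
  have hdisj : Disjoint (fun p : F × F => p.1 = 0) (fun p => p.1 ≠ 0 ∧ p.2 = 0) := by
    intro r h1 h2 x hx
    exact absurd (h1 x hx) (h2 x hx).1
  have e2 := subtypeOrEquiv _ _ hdisj
  have e3 : {p : F × F // p.1 = 0} ≃ F :=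
    { toFun := fun v => v.1.2
      invFun := fun b => ⟨(0, b), rfl⟩
      left_inv := fun v => by
        apply Subtype.ext
        calc ((0 : F), v.1.2) = (v.1.1, v.1.2) := by rw [v.2]
          _ = v.1 := rfl
      right_inv := fun b => rfl }
  have e4 : {p : F × F // p.1 ≠ 0 ∧ p.2 = 0} ≃ {x : F // x ≠ 0} :=
    { toFun := fun v => ⟨v.1.1, v.2.1⟩
      invFun := fun x => ⟨(x.1, 0), x.2, rfl⟩
      left_inv := fun v => by
        apply Subtype.ext
        calc (v.1.1, (0:F)) = (v.1.1, v.1.2) := by rw [v.2.2]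
          _ = v.1 := rfl
      right_inv := fun x => rfl }
  rw [Fintype.card_congr (((e1.trans e2).trans (Equiv.sumCongr e3 e4)))]
  rw [Fintype.card_sum, card_ne_zero']
  have : 0 < Fintype.card F := Fintype.card_pos
  omega

lemma card_linear (c d : F) (hc : c ^ 2 - 1 ≠ 0) :
    Fintype.card {p : F × F // (c * p.1 - p.2) * (p.1 - c * p.2) = d} =
    Fintype.card {p : F × F // p.1 * p.2 = d} := by
  apply Fintype.card_congr
  exact Equiv.subtypeEquiv
    { toFun := fun p => (c * p.1 - p.2, p.1 - c * p.2)
      invFun := fun p => ((c * p.1 - p.2) / (c ^ 2 - 1), (p.1 - c * p.2) / (c ^ 2 - 1))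
      left_inv := fun p => by
        apply Prod.ext <;> (field_simp; ring)
      right_inv := fun p => by
        apply Prod.ext <;> (field_simp; ring) }
    (fun p => Iff.rfl)

lemma card_two_vals (h1 : (1 : F) ≠ -1) :
    Fintype.card {x : F // x * x = 1} = 2 := by
  have e : {x : F // x * x = 1} ≃ {x : F // x = 1 ∨ x = -1} :=
    Equiv.subtypeEquivRight (fun x => mul_self_eq_one_iff)
  rw [Fintype.card_congr e, Fintype.card_subtype]
  rw [Finset.filter_or, Finset.filter_eq', Finset.filter_eq']
  simp only [Finset.mem_univ, if_true]
  rw [Finset.card_union_of_disjoint (by simpa using h1)]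
  simp

lemma card_sq_one (h1 : (1 : F) ≠ -1) :
    Fintype.card {p : F × F // (p.1 - p.2) * (p.1 - p.2) = 1} = 2 * Fintype.card F := by
  have e : {p : F × F // (p.1 - p.2) * (p.1 - p.2) = 1} ≃ {p : F × F // p.1 * p.1 = 1} :=
    Equiv.subtypeEquiv
      { toFun := fun p => (p.1 - p.2, p.2)
        invFun := fun p => (p.1 + p.2, p.2)
        left_inv := fun p => by simp
        right_inv := fun p => by simp }
      (fun p => Iff.rfl)
  have e2 : {p : F × F // p.1 * p.1 = 1} ≃ {x : F // x * x = 1} × F :=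
    { toFun := fun v => (⟨v.1.1, v.2⟩, v.1.2)
      invFun := fun x => ⟨(x.1.1, x.2), x.1.2⟩
      left_inv := fun v => rfl
      right_inv := fun x => rfl }
  rw [Fintype.card_congr (e.trans e2), Fintype.card_prod, card_two_vals h1]

lemma card_sq_one' (h1 : (1 : F) ≠ -1) :
    Fintype.card {p : F × F // (p.1 + p.2) * (p.1 + p.2) = 1} = 2 * Fintype.card F := by
  have e : {p : F × F // (p.1 + p.2) * (p.1 + p.2) = 1} ≃
      {p : F × F // (p.1 - p.2) * (p.1 - p.2) = 1} :=
    Equiv.subtypeEquiv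
      { toFun := fun p => ((p.1 : F), -p.2)
        invFun := fun p => ((p.1 : F), -p.2)
        left_inv := fun p => by simp
        right_inv := fun p => by simp }
      (fun p => by simp [sub_neg_eq_add])
  rw [Fintype.card_congr e, card_sq_one h1]

end helpers

theorem stmt_4 (p n : ℕ) [Fact p.Prime] (hodd : p ≠ 2) (hn : 0 < n)
    (hleg : legendreSym p 2 = 1)
    (F : Type) [Field F] [Fintype F] (hF : Fintype.card F = p ^ n) :
    Nat.card {v : F × F × F //
      v.2.2 ^ 3 - v.1 * v.2.1 * v.2.2 ^ 2 + (v.1 ^ 2 + v.2.1 ^ 2 - 2) * v.2.2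
        - v.1 * v.2.1 = 0} = (p ^ n) ^ 2 + 4 * p ^ n + 2 := by
  letI : DecidableEq F := Classical.decEq F
  have hp : p.Prime := Fact.out
  -- characteristic of F is p
  obtain ⟨m, hrp, hcard⟩ := FiniteField.card F (ringChar F)
  have hdvd : p ∣ ringChar F ^ (m : ℕ) := by
    rw [← hcard, hF]
    exact dvd_pow_self p hn.ne'
  have hpr : p = ringChar F :=
    (Nat.prime_dvd_prime_iff_eq hp hrp).mp (hp.dvd_of_dvd_pow hdvd)
  haveI : CharP F p := hpr ▸ ringChar.charP F
  -- 2 ≠ 0 in F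
  have h2 : (2 : F) ≠ 0 := by
    intro h
    have : ((2 : ℕ) : F) = 0 := by exact_mod_cast h
    have := (CharP.cast_eq_zero_iff F p 2).mp this
    rcases (Nat.prime_dvd_prime_iff_eq hp Nat.prime_two).mp this with h'
    exact hodd h'
  have h1 : (1 : F) ≠ -1 := by
    intro h
    exact h2 (by linear_combination h)
  -- a square root of 2 in F
  have h2p : ((2 : ℤ) : ZMod p) ≠ 0 := by
    intro h
    have : ((2 : ℕ) : ZMod p) = 0 := by exact_mod_cast h
    have := (CharP.cast_eq_zero_iff (ZMod p) p 2).mp this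
    exact hodd ((Nat.prime_dvd_prime_iff_eq hp Nat.prime_two).mp this)
  have hsq : IsSquare ((2 : ℤ) : ZMod p) := (legendreSym.eq_one_iff p h2p).mp hleg
  have hsqF : IsSquare (2 : F) := by
    have := hsq.map (ZMod.castHom (dvd_refl p) F)
    have h22 : (ZMod.castHom (dvd_refl p) F) ((2 : ℤ) : ZMod p) = (2 : F) := by
      push_cast
      exact map_ofNat _ 2
    rwa [h22] at this
  obtain ⟨t, ht'⟩ := hsqF
  have ht : t * t = 2 := ht'.symm
  -- basic distinctness facts
  have ht0 : t ≠ 0 := by intro h; exact h2 (by rw [← ht, h, mul_zero])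
  have ht1 : t ≠ 1 := by
    intro h
    exact one_ne_zero (α := F) (by linear_combination (t + 1) * h - ht)
  have htm1 : t ≠ -1 := by
    intro h
    exact one_ne_zero (α := F) (by linear_combination (t - 1) * h - ht)
  have htt : t ≠ -t := by
    intro h
    have h2t : (2 : F) * t = 0 := by linear_combination h
    rcases mul_eq_zero.mp h2t with h' | h'
    · exact h2 h'
    · exact ht0 h'
  have h01 : (0 : F) ≠ 1 := zero_ne_one
  have h0m1 : (0 : F) ≠ -1 := by
    intro h; exact one_ne_zero (α := F) (by linear_combination h)
  have h0t : (0 : F) ≠ t := fun h => ht0 h.symm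
  have h0mt : (0 : F) ≠ -t := by
    intro h; exact ht0 (by linear_combination h)
  have h1t : (1 : F) ≠ t := fun h => ht1 h.symm
  have h1mt : (1 : F) ≠ -t := by
    intro h; exact htm1 (by linear_combination h)
  have hm1t : (-1 : F) ≠ t := fun h => htm1 h.symm
  have hm1mt : (-1 : F) ≠ -t := by
    intro h; exact ht1 (by linear_combination h)
  -- the equivalence with a sigma type, fibered over c
  have efact : {v : F × F × F //
      v.2.2 ^ 3 - v.1 * v.2.1 * v.2.2 ^ 2 + (v.1 ^ 2 + v.2.1 ^ 2 - 2) * v.2.2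
        - v.1 * v.2.1 = 0} ≃
      Σ c : F, {q : F × F // (c * q.1 - q.2) * (q.1 - c * q.2) = c * (2 - c ^ 2)} := by
    refine (Equiv.subtypeEquivRight (q := fun v : F × F × F =>
      (v.2.2 * v.1 - v.2.1) * (v.1 - v.2.2 * v.2.1) = v.2.2 * (2 - v.2.2 ^ 2)) fun v => ?_).trans
      { toFun := fun v => ⟨v.1.2.2, ⟨(v.1.1, v.1.2.1), v.2⟩⟩
        invFun := fun x => ⟨(x.2.1.1, x.2.1.2, x.1), x.2.2⟩
        left_inv := fun v => rfl
        right_inv := fun x => rfl }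
    constructor
    · intro h; linear_combination h
    · intro h; linear_combination h
  rw [Nat.card_eq_fintype_card, Fintype.card_congr efact, Fintype.card_sigma]
  -- the special fibers
  set T : Finset F := insert 0 (insert 1 (insert (-1) (insert t {-t}))) with hTdef
  have hm0 : (0 : F) ∉ insert 1 (insert (-1) (insert t ({-t} : Finset F))) := by
    simp only [Finset.mem_insert, Finset.mem_singleton]
    push_neg
    exact ⟨h01, h0m1, h0t, h0mt⟩
  have hm1 : (1 : F) ∉ insert (-1) (insert t ({-t} : Finset F)) := by
    simp only [Finset.mem_insert, Finset.mem_singleton]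
    push_neg
    exact ⟨h1, h1t, h1mt⟩
  have hm2 : (-1 : F) ∉ insert t ({-t} : Finset F) := by
    simp only [Finset.mem_insert, Finset.mem_singleton]
    push_neg
    exact ⟨hm1t, hm1mt⟩
  have hm3 : t ∉ ({-t} : Finset F) := by
    simp only [Finset.mem_singleton]
    exact htt
  have hT5 : T.card = 5 := by
    rw [hTdef, Finset.card_insert_of_notMem hm0, Finset.card_insert_of_notMem hm1,
      Finset.card_insert_of_notMem hm2, Finset.card_insert_of_notMem hm3,
      Finset.card_singleton]
  have hq5 : 5 ≤ Fintype.card F := hT5 ▸ Finset.card_le_univ T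
  rw [← Finset.sum_sdiff (Finset.subset_univ T)]
  -- generic fibers have q - 1 points
  have hrest : ∀ c ∈ Finset.univ \ T,
      Fintype.card {q : F × F // (c * q.1 - q.2) * (q.1 - c * q.2) = c * (2 - c ^ 2)}
        = Fintype.card F - 1 := by
    intro c hc
    rw [Finset.mem_sdiff, hTdef] at hc
    simp only [Finset.mem_insert, Finset.mem_singleton] at hc
    push_neg at hc
    obtain ⟨-, hc0, hc1, hcm1, hct, hcmt⟩ := hc
    have hc2 : c ^ 2 - 1 ≠ 0 := by
      intro h
      have : (c - 1) * (c + 1) = 0 := by linear_combination h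
      rcases mul_eq_zero.mp this with h' | h'
      · exact hc1 (by linear_combination h')
      · exact hcm1 (by linear_combination h')
    have hd : c * (2 - c ^ 2) ≠ 0 := by
      refine mul_ne_zero hc0 ?_
      intro h
      have : (c - t) * (c + t) = 0 := by linear_combination -h - ht
      rcases mul_eq_zero.mp this with h' | h'
      · exact hct (by linear_combination h')
      · exact hcmt (by linear_combination h')
    rw [card_linear c _ hc2, card_hyperbola hd]
  rw [Finset.sum_congr rfl hrest, Finset.sum_const, Finset.card_sdiff_of_subset (Finset.subset_univ T),
    Finset.card_univ, hT5, smul_eq_mul]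
  -- the five special fibers
  rw [hTdef, Finset.sum_insert hm0, Finset.sum_insert hm1, Finset.sum_insert hm2,
    Finset.sum_insert hm3, Finset.sum_singleton]
  have v0 : Fintype.card {q : F × F //
      ((0 : F) * q.1 - q.2) * (q.1 - (0 : F) * q.2) = (0 : F) * (2 - (0 : F) ^ 2)}
      = 2 * Fintype.card F - 1 := by
    rw [card_linear (0 : F) _ (by norm_num)]
    rw [Fintype.card_congr (Equiv.subtypeEquivRight
      (q := fun q : F × F => q.1 * q.2 = 0) (fun x => by norm_num))]
    exact card_degenerate
  have v1 : Fintype.card {q : F × F //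
      ((1 : F) * q.1 - q.2) * (q.1 - (1 : F) * q.2) = (1 : F) * (2 - (1 : F) ^ 2)}
      = 2 * Fintype.card F := by
    rw [Fintype.card_congr (Equiv.subtypeEquivRight
      (q := fun q : F × F => (q.1 - q.2) * (q.1 - q.2) = 1) (fun x => by
        constructor
        · intro h; linear_combination h
        · intro h; linear_combination h))]
    exact card_sq_one h1
  have vm1 : Fintype.card {q : F × F //
      ((-1 : F) * q.1 - q.2) * (q.1 - (-1 : F) * q.2) = (-1 : F) * (2 - (-1 : F) ^ 2)}
      = 2 * Fintype.card F := by
    rw [Fintype.card_congr (Equiv.subtypeEquivRight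
      (q := fun q : F × F => (q.1 + q.2) * (q.1 + q.2) = 1) (fun x => by
        constructor
        · intro h; linear_combination -h
        · intro h; linear_combination -h))]
    exact card_sq_one' h1
  have vt : Fintype.card {q : F × F //
      (t * q.1 - q.2) * (q.1 - t * q.2) = t * (2 - t ^ 2)}
      = 2 * Fintype.card F - 1 := by
    have h2t : t ^ 2 - 1 ≠ 0 := by
      rw [sq, ht]; norm_num
    rw [card_linear t _ h2t]
    have hval : t * (2 - t ^ 2) = 0 := by rw [sq, ht]; ring
    rw [Fintype.card_congr (Equiv.subtypeEquivRight
      (q := fun q : F × F => q.1 * q.2 = 0) (fun x => by rw [hval]))]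
    exact card_degenerate
  have vmt : Fintype.card {q : F × F //
      ((-t) * q.1 - q.2) * (q.1 - (-t) * q.2) = (-t) * (2 - (-t) ^ 2)}
      = 2 * Fintype.card F - 1 := by
    have h2t : (-t) ^ 2 - 1 ≠ 0 := by
      rw [neg_sq, sq, ht]; norm_num
    rw [card_linear (-t) _ h2t]
    have hval : (-t) * (2 - (-t) ^ 2) = 0 := by rw [neg_sq, sq, ht]; ring
    rw [Fintype.card_congr (Equiv.subtypeEquivRight
      (q := fun q : F × F => q.1 * q.2 = 0) (fun x => by rw [hval]))]
    exact card_degenerate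
  rw [v0, v1, vm1, vt, vmt, ← hF]
  obtain ⟨k, hk⟩ : ∃ k, Fintype.card F = k + 5 := ⟨Fintype.card F - 5, by omega⟩
  rw [hk]
  have e1 : k + 5 - 5 = k := by omega
  have e2 : k + 5 - 1 = k + 4 := by omega
  have e3 : 2 * (k + 5) - 1 = 2 * k + 9 := by omega
  rw [e1, e2, e3]
  ring
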